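/- Let r, t ∈ ℝ^N with r ≠ 0, and suppose ‖r − t‖₂² ≤ ‖r‖₂². Define γ = 1 − ‖r − t‖₂²/‖r‖₂². Then γ ∈ [0, 1], and for every learning rate η with 0 < η ≤ 1, ‖r − η·t‖₂² ≤ (1 − η·γ)·‖r‖₂². In particular the squared residual norm strictly decreases whenever γ > 0. -/

import Mathlib

/-- **Stage-wise risk reduction.**
Let `r, t ∈ ℝᴺ` with `r ≠ 0` and `‖r − t‖² ≤ ‖r‖²`, and set
`γ = 1 − ‖r − t‖²/‖r‖²`.  Then `γ ∈ [0,1]`, and for every learning rate `η ∈ (0,1]`,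
`‖r − η·t‖² ≤ (1 − ηγ)‖r‖²`; in particular the squared residual norm strictly decreases
whenever `γ > 0`. -/
theorem stagewise_risk_reduction {N : ℕ}
    (r t : EuclideanSpace ℝ (Fin N)) (hr : r ≠ 0)
    (h : ‖r - t‖ ^ 2 ≤ ‖r‖ ^ 2) :
    (0 ≤ 1 - ‖r - t‖ ^ 2 / ‖r‖ ^ 2) ∧
    (1 - ‖r - t‖ ^ 2 / ‖r‖ ^ 2 ≤ 1) ∧
    (∀ η : ℝ, 0 < η → η ≤ 1 →
      ‖r - η • t‖ ^ 2 ≤ (1 - η * (1 - ‖r - t‖ ^ 2 / ‖r‖ ^ 2)) * ‖r‖ ^ 2) ∧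
    (0 < 1 - ‖r - t‖ ^ 2 / ‖r‖ ^ 2 →
      ∀ η : ℝ, 0 < η → η ≤ 1 → ‖r - η • t‖ ^ 2 < ‖r‖ ^ 2) := by
  have hA : (0:ℝ) < ‖r‖ ^ 2 := by
    have : (0:ℝ) < ‖r‖ := norm_pos_iff.mpr hr
    positivity
  have hexp : ‖r - t‖ ^ 2 = ‖r‖ ^ 2 - 2 * inner ℝ r t + ‖t‖ ^ 2 :=
    norm_sub_sq_real r t
  have key : ∀ η : ℝ, 0 < η → η ≤ 1 →
      ‖r - η • t‖ ^ 2 ≤ (1 - η * (1 - ‖r - t‖ ^ 2 / ‖r‖ ^ 2)) * ‖r‖ ^ 2 := by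
    intro η hη hη1
    have hexp2 : ‖r - η • t‖ ^ 2
        = ‖r‖ ^ 2 - 2 * (η * inner ℝ r t) + η ^ 2 * ‖t‖ ^ 2 := by
      rw [norm_sub_sq_real r (η • t), real_inner_smul_right, norm_smul]
      have : ‖η‖ = |η| := rfl
      rw [mul_pow, this, sq_abs]
    have hdiv : ‖r - t‖ ^ 2 / ‖r‖ ^ 2 * ‖r‖ ^ 2 = ‖r - t‖ ^ 2 :=
      div_mul_cancel₀ _ (ne_of_gt hA)
    have hηη : η ^ 2 ≤ η := by nlinarith
    have ht : η ^ 2 * ‖t‖ ^ 2 ≤ η * ‖t‖ ^ 2 :=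
      mul_le_mul_of_nonneg_right hηη (sq_nonneg _)
    nlinarith [hexp2, hdiv, hexp]
  refine ⟨by
      have : ‖r - t‖ ^ 2 / ‖r‖ ^ 2 ≤ 1 := by
        rw [div_le_one hA]; exact h
      linarith,
    by
      have : 0 ≤ ‖r - t‖ ^ 2 / ‖r‖ ^ 2 := by positivity
      linarith,
    key, ?_⟩
  intro hγ η hη hη1
  have := key η hη hη1
  have hlt : (1 - η * (1 - ‖r - t‖ ^ 2 / ‖r‖ ^ 2)) * ‖r‖ ^ 2 < ‖r‖ ^ 2 := by
    nlinarith [mul_pos (mul_pos hη hγ) hA]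
  linarith
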